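/- For any path flow f in a multi-commodity routing instance, f is a 1-UNE if and only if the edge flow induced by f is a 1-PNE; that is, every used path of every commodity has minimal latency among all paths of that commodity if and only if every positive path of every commodity has minimal latency among all paths of that commodity. -/

import Mathlib

open scoped BigOperators

/-- A routing instance: a finite directed (multi)graph given by source/target maps
on edges, a finite set of commodities with sources, sinks, demands, and
load-dependent latency functions on edges. -/
structure RoutingInstance (V E K : Type*) where
  src : E → V
  tgt : E → V
  source : K → V
  sink : K → V
  demand : K → ℝ
  latency : E → ℝ → ℝ

namespace RoutingInstance

variable {V E K : Type*} [Fintype V] [Fintype E] [Fintype K] [DecidableEq E]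

/-- Standard assumptions: positive demands, latencies nonnegative and
nondecreasing on `[0, ∞)`. -/
def Standard (G : RoutingInstance V E K) : Prop :=
  (∀ k, 0 < G.demand k) ∧
  (∀ e x, (0:ℝ) ≤ x → 0 ≤ G.latency e x) ∧
  (∀ e, MonotoneOn (G.latency e) (Set.Ici (0:ℝ)))

/-- `G.IsWalkFrom s t l` : the list of edges `l` is a directed walk from `s` to `t`. -/
def IsWalkFrom (G : RoutingInstance V E K) : V → V → List E → Prop
  | s, t, [] => s = t
  | s, t, e :: es => G.src e = s ∧ IsWalkFrom G (G.tgt e) t es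

/-- The list of vertices visited by a walk starting at `s`. -/
def walkVerts (G : RoutingInstance V E K) (s : V) (l : List E) : List V :=
  s :: l.map G.tgt

/-- A simple directed path from the source of commodity `k` to its sink. -/
def IsPathOf (G : RoutingInstance V E K) (k : K) (p : List E) : Prop :=
  G.IsWalkFrom (G.source k) (G.sink k) p ∧ (G.walkVerts (G.source k) p).Nodup

/-- A feasible path flow: nonnegative, supported on simple `s_k`-`t_k` paths,
and routing the whole demand of each commodity. -/
def Feasible (G : RoutingInstance V E K) (f : K → (List E →₀ ℝ)) : Prop :=
  (∀ k p, 0 ≤ f k p) ∧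
  (∀ k p, f k p ≠ 0 → G.IsPathOf k p) ∧
  (∀ k, ((f k).sum fun _ v => v) = G.demand k)

/-- Edge flow of commodity `k` induced by a path flow. -/
def edgeFlowK (G : RoutingInstance V E K) (f : K → (List E →₀ ℝ)) (k : K) (e : E) : ℝ :=
  (f k).sum fun p v => if e ∈ p then v else 0

/-- Total edge flow induced by a path flow. -/
def edgeFlow (G : RoutingInstance V E K) (f : K → (List E →₀ ℝ)) (e : E) : ℝ :=
  ∑ k, G.edgeFlowK f k e

/-- Latency (cost) of a path under the edge flows induced by the path flow `f`. -/
def pathCost (G : RoutingInstance V E K) (f : K → (List E →₀ ℝ)) (p : List E) : ℝ :=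
  (p.map fun e => G.latency e (G.edgeFlow f e)).sum

/-- A path is used by commodity `k` if it carries positive flow in `f`. -/
def Used (G : RoutingInstance V E K) (f : K → (List E →₀ ℝ)) (k : K) (p : List E) : Prop :=
  0 < f k p

/-- A path is positive for commodity `k` if each of its edges carries positive
commodity-`k` flow. -/
def PositivePath (G : RoutingInstance V E K) (f : K → (List E →₀ ℝ)) (k : K) (p : List E) :
    Prop :=
  G.IsPathOf k p ∧ ∀ e ∈ p, 0 < G.edgeFlowK f k e

/-- θ-Positive Nash Equilibrium (a property of the induced edge flow):
every positive path costs at most θ times any path of the same commodity. -/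
def IsPNE (G : RoutingInstance V E K) (θ : ℝ) (f : K → (List E →₀ ℝ)) : Prop :=
  ∀ k p q, G.PositivePath f k p → G.IsPathOf k q →
    G.pathCost f p ≤ θ * G.pathCost f q

/-- θ-Used Nash Equilibrium: every used path costs at most θ times any path
of the same commodity. -/
def IsUNE (G : RoutingInstance V E K) (θ : ℝ) (f : K → (List E →₀ ℝ)) : Prop :=
  ∀ k p q, G.Used f k p → G.IsPathOf k q →
    G.pathCost f p ≤ θ * G.pathCost f q

/-- θ-Envy Free: every used path costs at most θ times any used path
of the same commodity. -/
def IsEF (G : RoutingInstance V E K) (θ : ℝ) (f : K → (List E →₀ ℝ)) : Prop :=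
  ∀ k p q, G.Used f k p → G.Used f k q →
    G.pathCost f p ≤ θ * G.pathCost f q

/-- Social cost of a path flow. -/
def socialCost (G : RoutingInstance V E K) (f : K → (List E →₀ ℝ)) : ℝ :=
  ∑ e, G.edgeFlow f e * G.latency e (G.edgeFlow f e)

end RoutingInstance

/- ### Auxiliary lemmas -/

private lemma list_dup_split {α : Type*} {xs : List α} (h : ¬ xs.Nodup) :
    ∃ xs1 x xs2, xs = xs1 ++ x :: xs2 ∧ x ∈ xs2 := by
  induction xs with
  | nil => simp at h
  | cons y ys ih =>
    by_cases hy : y ∈ ys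
    · exact ⟨[], y, ys, rfl, hy⟩
    · have hys : ¬ ys.Nodup := fun hn => h (List.nodup_cons.mpr ⟨hy, hn⟩)
      obtain ⟨xs1, x, xs2, heq, hx⟩ := ih hys
      exact ⟨y :: xs1, x, xs2, by rw [heq]; rfl, hx⟩

private lemma list_map_split {α β : Type*} (f : α → β) :
    ∀ (ys : List β) (l : List α) (x : β) (zs : List β),
      l.map f = ys ++ x :: zs →
      ∃ ly e lz, l = ly ++ e :: lz ∧ ly.map f = ys ∧ f e = x ∧ lz.map f = zs := by
  intro ys
  induction ys with
  | nil =>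
    intro l x zs h
    cases l with
    | nil => simp at h
    | cons a l' =>
      simp only [List.map_cons, List.nil_append, List.cons.injEq] at h
      exact ⟨[], a, l', rfl, rfl, h.1, h.2⟩
  | cons y ys' ih =>
    intro l x zs h
    cases l with
    | nil => simp at h
    | cons a l' =>
      simp only [List.map_cons, List.cons_append, List.cons.injEq] at h
      obtain ⟨ly, e, lz, rfl, h1, h2, h3⟩ := ih l' x zs h.2
      exact ⟨a :: ly, e, lz, rfl, by simp [h.1, h1], h2, h3⟩

namespace RoutingInstance

variable {V E K : Type*} [Fintype V] [Fintype E] [Fintype K] [DecidableEq E]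
variable (G : RoutingInstance V E K)

lemma isWalkFrom_append {s u t : V} {l1 l2 : List E}
    (h1 : G.IsWalkFrom s u l1) (h2 : G.IsWalkFrom u t l2) :
    G.IsWalkFrom s t (l1 ++ l2) := by
  induction l1 generalizing s with
  | nil =>
    obtain rfl : s = u := h1
    exact h2
  | cons e es ih => exact ⟨h1.1, ih h1.2⟩

lemma isWalkFrom_split {s t : V} {l1 l2 : List E}
    (h : G.IsWalkFrom s t (l1 ++ l2)) :
    ∃ u, G.IsWalkFrom s u l1 ∧ G.IsWalkFrom u t l2 := by
  induction l1 generalizing s with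
  | nil => exact ⟨s, rfl, h⟩
  | cons e es ih =>
    obtain ⟨u, h1, h2⟩ := ih h.2
    exact ⟨u, ⟨h.1, h1⟩, h2⟩

lemma exists_nodup_walk (c : E → ℝ) (hc : ∀ e, 0 ≤ c e) :
    ∀ (n : ℕ) (l : List E) (s t : V), l.length ≤ n → G.IsWalkFrom s t l →
      ∃ l', G.IsWalkFrom s t l' ∧ (G.walkVerts s l').Nodup ∧
        (l'.map c).sum ≤ (l.map c).sum := by
  intro n
  induction n with
  | zero =>
    intro l s t hlen hw
    obtain rfl : l = [] := List.length_eq_zero_iff.mp (Nat.le_zero.mp hlen)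
    exact ⟨[], hw, by simp [walkVerts], le_rfl⟩
  | succ n ih =>
    intro l s t hlen hw
    by_cases hnd : (G.walkVerts s l).Nodup
    · exact ⟨l, hw, hnd, le_rfl⟩
    · obtain ⟨xs1, x, xs2, heq, hx⟩ := list_dup_split hnd
      obtain ⟨A, B, hAB⟩ := List.append_of_mem hx
      subst hAB
      rw [walkVerts] at heq
      cases xs1 with
      | nil =>
        -- s = x and l.map tgt = A ++ x :: B
        simp only [List.nil_append, List.cons.injEq] at heq
        obtain ⟨rfl, hmap⟩ := heq
        obtain ⟨la, e, lb, rfl, _, hte, _⟩ := list_map_split G.tgt A l s B hmap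
        obtain ⟨u, _, hw2⟩ := G.isWalkFrom_split hw
        have hw3 : G.IsWalkFrom s t lb := by
          have := hw2.2
          rwa [hte] at this
        have hlen' : lb.length ≤ n := by
          have := hlen
          simp only [List.length_append, List.length_cons] at this
          omega
        obtain ⟨l', hl1, hl2, hl3⟩ := ih lb s t hlen' hw3
        refine ⟨l', hl1, hl2, hl3.trans ?_⟩
        simp only [List.map_append, List.sum_append, List.map_cons, List.sum_cons]
        have h1 : 0 ≤ (la.map c).sum :=
          List.sum_nonneg (by intro y hy; obtain ⟨e2, _, rfl⟩ := List.mem_map.mp hy; exact hc e2)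
        have h2 := hc e
        linarith
      | cons w xs1' =>
        -- l.map tgt = xs1' ++ x :: A ++ x :: B
        simp only [List.cons_append, List.cons.injEq] at heq
        obtain ⟨la, e, rest, rfl, _, hte, hrest⟩ :=
          list_map_split G.tgt xs1' l x (A ++ x :: B) heq.2
        obtain ⟨lm, e', lb, rfl, _, hte', _⟩ :=
          list_map_split G.tgt A rest x B hrest
        obtain ⟨u, hwla, hw2⟩ := G.isWalkFrom_split hw
        -- hw2 : IsWalkFrom u t (e :: (lm ++ e' :: lb))
        obtain ⟨u', hwlm, hw3⟩ := G.isWalkFrom_split hw2.2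
        -- hw3 : IsWalkFrom u' t (e' :: lb)
        have hw4 : G.IsWalkFrom (G.tgt e) t lb := by
          have := hw3.2
          rw [hte', ← hte] at this
          exact this
        have hwnew : G.IsWalkFrom s t (la ++ e :: lb) :=
          G.isWalkFrom_append hwla ⟨hw2.1, hw4⟩
        have hlen' : (la ++ e :: lb).length ≤ n := by
          simp only [List.length_append, List.length_cons] at hlen ⊢
          omega
        obtain ⟨l', hl1, hl2, hl3⟩ := ih (la ++ e :: lb) s t hlen' hwnew
        refine ⟨l', hl1, hl2, hl3.trans ?_⟩
        simp only [List.map_append, List.sum_append, List.map_cons, List.sum_cons]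
        have h1 : 0 ≤ (lm.map c).sum :=
          List.sum_nonneg (by intro y hy; obtain ⟨e2, _, rfl⟩ := List.mem_map.mp hy; exact hc e2)
        have h2 := hc e'
        linarith

lemma edgeFlowK_nonneg {f : K → (List E →₀ ℝ)} (hf : ∀ k p, 0 ≤ f k p)
    (k : K) (e : E) : 0 ≤ G.edgeFlowK f k e :=
  Finset.sum_nonneg fun p _ => by
    dsimp only; split <;> [exact hf k p; exact le_rfl]

lemma edgeFlow_nonneg {f : K → (List E →₀ ℝ)} (hf : ∀ k p, 0 ≤ f k p)
    (e : E) : 0 ≤ G.edgeFlow f e :=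
  Finset.sum_nonneg fun k _ => G.edgeFlowK_nonneg hf k e

/-- Infimum cost of a walk from `s` to `v` with edge costs `c`. -/
noncomputable def walkDist (G : RoutingInstance V E K) (c : E → ℝ) (s v : V) : ℝ :=
  sInf {x | ∃ l, G.IsWalkFrom s v l ∧ (l.map c).sum = x}

lemma walkDist_le {c : E → ℝ} (hc : ∀ e, 0 ≤ c e) {s v : V} {l : List E}
    (h : G.IsWalkFrom s v l) : G.walkDist c s v ≤ (l.map c).sum :=
  csInf_le ⟨0, by
    rintro x ⟨l', _, rfl⟩
    exact List.sum_nonneg fun y hy => by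
      obtain ⟨e2, _, rfl⟩ := List.mem_map.mp hy; exact hc e2⟩ ⟨l, h, rfl⟩

lemma le_walkDist {c : E → ℝ} {s v : V} {y : ℝ} (hne : ∃ l, G.IsWalkFrom s v l)
    (h : ∀ l, G.IsWalkFrom s v l → y ≤ (l.map c).sum) : y ≤ G.walkDist c s v := by
  obtain ⟨l0, hl0⟩ := hne
  exact le_csInf ⟨_, l0, hl0, rfl⟩ (by rintro x ⟨l, hl, rfl⟩; exact h l hl)

end RoutingInstance

open RoutingInstance in
/-- A path flow is a 1-UNE iff its induced edge flow is a 1-PNE. -/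
theorem stmt_5 {V E K : Type*} [Fintype V] [Fintype E] [Fintype K] [DecidableEq E]
    (G : RoutingInstance V E K) (hG : G.Standard)
    (f : K → (List E →₀ ℝ)) (hf : G.Feasible f) :
    G.IsUNE 1 f ↔ G.IsPNE 1 f := by
  obtain ⟨hdem, hlat0, hlatmono⟩ := hG
  obtain ⟨hfpos, hfpath, hfdem⟩ := hf
  set c : E → ℝ := fun e => G.latency e (G.edgeFlow f e) with hc_def
  have hc : ∀ e, 0 ≤ c e := fun e => hlat0 e _ (G.edgeFlow_nonneg hfpos e)
  have hpc : ∀ l, G.pathCost f l = (l.map c).sum := fun l => rfl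
  constructor
  · -- UNE → PNE
    intro hUNE k p q hp hq
    rw [one_mul, hpc, hpc]
    -- every used-path comparison, via the UNE property and cycle removal
    have hUNE' : ∀ u, G.Used f k u → ∀ l, G.IsWalkFrom (G.source k) (G.sink k) l →
        (u.map c).sum ≤ (l.map c).sum := by
      intro u hu l hl
      obtain ⟨l', hl1, hl2, hl3⟩ := G.exists_nodup_walk c hc l.length l _ _ le_rfl hl
      have h := hUNE k u l' hu ⟨hl1, hl2⟩
      rw [one_mul, hpc, hpc] at h
      exact h.trans hl3
    -- key: along edges with positive commodity flow, walk distances are tight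
    have hkey : ∀ e ∈ p, G.walkDist c (G.source k) (G.tgt e) =
        G.walkDist c (G.source k) (G.src e) + c e := by
      intro e he
      -- find a used path through e
      have hpos := hp.2 e he
      have hterm : ∃ u ∈ (f k).support, 0 < (if e ∈ u then f k u else 0) := by
        by_contra hcon
        push_neg at hcon
        have : G.edgeFlowK f k e ≤ 0 :=
          Finset.sum_nonpos fun u hu => by simpa using hcon u hu
        linarith
      obtain ⟨u, husup, hupos⟩ := hterm
      have heu : e ∈ u := by by_contra h; simp [h] at hupos
      have hused : G.Used f k u := by
        rw [if_pos heu] at hupos; exact hupos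
      have hupath : G.IsPathOf k u := hfpath k u (Finsupp.mem_support_iff.mp husup)
      obtain ⟨u1, u2, rfl⟩ := List.append_of_mem heu
      obtain ⟨v1, hw1, hw2'⟩ := G.isWalkFrom_split hupath.1
      have hw1 : G.IsWalkFrom (G.source k) (G.src e) u1 := by rwa [hw2'.1]
      have hw2 : G.IsWalkFrom (G.tgt e) (G.sink k) u2 := hw2'.2
      have hcu : ((u1 ++ e :: u2).map c).sum = (u1.map c).sum + c e + (u2.map c).sum := by
        simp only [List.map_append, List.sum_append, List.map_cons, List.sum_cons]
        ring
      have hd_u1 : G.walkDist c (G.source k) (G.src e) ≤ (u1.map c).sum :=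
        G.walkDist_le hc hw1
      have hb_u2 : G.walkDist c (G.tgt e) (G.sink k) ≤ (u2.map c).sum :=
        G.walkDist_le hc hw2
      have h_ub : G.walkDist c (G.source k) (G.tgt e) ≤
          G.walkDist c (G.source k) (G.src e) + c e := by
        have : G.walkDist c (G.source k) (G.tgt e) - c e ≤
            G.walkDist c (G.source k) (G.src e) := by
          refine G.le_walkDist ⟨u1, hw1⟩ fun l hl => ?_
          have hwalk : G.IsWalkFrom (G.source k) (G.tgt e) (l ++ [e]) :=
            G.isWalkFrom_append hl ⟨rfl, rfl⟩
          have := G.walkDist_le hc hwalk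
          simp only [List.map_append, List.sum_append, List.map_cons, List.map_nil,
            List.sum_cons, List.sum_nil] at this
          linarith
        linarith
      have h_lb : G.walkDist c (G.source k) (G.src e) + c e ≤
          G.walkDist c (G.source k) (G.tgt e) := by
        refine G.le_walkDist ⟨u1 ++ [e], G.isWalkFrom_append hw1 ⟨rfl, rfl⟩⟩ fun l hl => ?_
        -- ((u1++e::u2).map c).sum - (l.map c).sum ≤ b (tgt e)
        have hstep : ((u1 ++ e :: u2).map c).sum - (l.map c).sum ≤
            G.walkDist c (G.tgt e) (G.sink k) := by
          refine G.le_walkDist ⟨u2, hw2⟩ fun l2 hl2 => ?_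
          have hwalk : G.IsWalkFrom (G.source k) (G.sink k) (l ++ l2) :=
            G.isWalkFrom_append hl hl2
          have := hUNE' _ hused _ hwalk
          simp only [List.map_append, List.sum_append, List.map_cons, List.sum_cons] at this
          linarith
        linarith
      linarith
    -- telescoping along the positive path p
    have htel : ∀ (l : List E) (s t : V), G.IsWalkFrom s t l →
        (∀ e ∈ l, G.walkDist c (G.source k) (G.tgt e) =
          G.walkDist c (G.source k) (G.src e) + c e) →
        (l.map c).sum + G.walkDist c (G.source k) s = G.walkDist c (G.source k) t := by
      intro l
      induction l with
      | nil =>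
        intro s t hw _
        obtain rfl : s = t := hw
        simp
      | cons e es ih =>
        intro s t hw hk
        have h1 := hk e List.mem_cons_self
        have h2 := ih (G.tgt e) t hw.2 fun e' he' => hk e' (List.mem_cons_of_mem _ he')
        rw [hw.1] at h1
        simp only [List.map_cons, List.sum_cons]
        linarith
    have htel_p := htel p (G.source k) (G.sink k) hp.1.1 hkey
    have hd_source : 0 ≤ G.walkDist c (G.source k) (G.source k) := by
      refine G.le_walkDist ⟨[], rfl⟩ fun l hl => ?_
      exact List.sum_nonneg fun y hy => by
        obtain ⟨e2, _, rfl⟩ := List.mem_map.mp hy; exact hc e2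
    have hd_sink : G.walkDist c (G.source k) (G.sink k) ≤ (q.map c).sum :=
      G.walkDist_le hc hq.1
    linarith
  · -- PNE → UNE
    intro hPNE k p q hp hq
    refine hPNE k p q ⟨hfpath k p (ne_of_gt hp), fun e he => ?_⟩ hq
    have hmem : p ∈ (f k).support := Finsupp.mem_support_iff.mpr (ne_of_gt hp)
    have hle : (if e ∈ p then f k p else 0) ≤ G.edgeFlowK f k e :=
      Finset.single_le_sum (f := fun pp => if e ∈ pp then f k pp else 0)
        (fun pp _ => by split <;> [exact hfpos k pp; exact le_rfl]) hmem
    rw [if_pos he] at hle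
    have hp' : 0 < f k p := hp
    linarith
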